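/- Let O ⊂ ℝ³ be a bounded open set with Lebesgue measure |O|, let k > 0, ε > 0, C_S > 0, M ≥ 0, and let v : ℝ³ → ℝ³ be a C³ vector field such that the operator norm of the Jacobian Dv(x) is at most M for every x ∈ O, and such that 2M + (C_S/2)·|O|^{1/6}·(∫_O |Δ(div v)|² dx)^{1/2} ≤ k. Let λ : ℝ³ → ℝ be a C³ function with compact support contained in O satisfying ‖λ‖_{L⁶(ℝ³)} ≤ √C_S · (∫|∇λ|² dx)^{1/2}, and define G := −εΔλ + kλ + v·∇λ + ½(div v)λ. Then (∫_{ℝ³} |∇λ|² dx)^{1/2} ≤ (2/k) · (∫_{ℝ³} |∇G|² dx)^{1/2}. -/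

import Mathlib

open MeasureTheory

set_option maxHeartbeats 1000000

noncomputable section

/-- Partial derivative in the `i`-th coordinate direction on `ℝ³`. -/
def pd {F : Type*} [NormedAddCommGroup F] [NormedSpace ℝ F]
    (f : EuclideanSpace ℝ (Fin 3) → F) (i : Fin 3) (x : EuclideanSpace ℝ (Fin 3)) : F :=
  fderiv ℝ f x (EuclideanSpace.single i 1)

/-- Divergence of a vector field on `ℝ³`. -/
def divg (v : EuclideanSpace ℝ (Fin 3) → EuclideanSpace ℝ (Fin 3))
    (x : EuclideanSpace ℝ (Fin 3)) : ℝ :=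
  ∑ i, pd (fun y => v y i) i x

/-- Laplacian on `ℝ³`. -/
def lap {F : Type*} [NormedAddCommGroup F] [NormedSpace ℝ F]
    (f : EuclideanSpace ℝ (Fin 3) → F) (x : EuclideanSpace ℝ (Fin 3)) : F :=
  ∑ i, pd (pd f i) i x

/- ## Auxiliary material -/

local notation "E3" => EuclideanSpace ℝ (Fin 3)

def vecOf (a : Fin 3 → ℝ) : EuclideanSpace ℝ (Fin 3) :=
  ∑ j, a j • EuclideanSpace.single j (1:ℝ)

lemma vecOf_apply (a : Fin 3 → ℝ) (i : Fin 3) : vecOf a i = a i := by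
  have h := map_sum (EuclideanSpace.proj (𝕜 := ℝ) i)
    (fun j => a j • EuclideanSpace.single j (1:ℝ)) Finset.univ
  simp only [PiLp.proj_apply, _root_.map_smul, smul_eq_mul] at h
  rw [vecOf, h]
  simp [EuclideanSpace.single_apply]

lemma inner_vecOf (u : EuclideanSpace ℝ (Fin 3)) (b : Fin 3 → ℝ) :
    @inner ℝ _ _ u (vecOf b) = ∑ i, u i * b i := by
  simp [PiLp.inner_apply, vecOf_apply, RCLike.inner_apply, mul_comm]

lemma support_pd_subset {F : Type*} [NormedAddCommGroup F] [NormedSpace ℝ F]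
    (f : E3 → F) (i : Fin 3) : Function.support (pd f i) ⊆ tsupport f := by
  intro x hx
  by_contra h
  have h0 : fderiv ℝ f x = 0 := by
    by_contra hne
    exact h (support_fderiv_subset ℝ hne)
  simp only [Function.mem_support, pd, h0, ContinuousLinearMap.zero_apply, ne_eq,
    not_true_eq_false] at hx

lemma hasCompactSupport_pd {F : Type*} [NormedAddCommGroup F] [NormedSpace ℝ F]
    {f : E3 → F} (hf : HasCompactSupport f) (i : Fin 3) : HasCompactSupport (pd f i) :=
  hf.mono' (support_pd_subset f i)

lemma contDiff_pd {F : Type*} [NormedAddCommGroup F] [NormedSpace ℝ F]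
    {f : E3 → F} {n m : ℕ} (hf : ContDiff ℝ n f) (h : m + 1 ≤ n) (i : Fin 3) :
    ContDiff ℝ m (pd f i) := by
  have : ContDiff ℝ m (fderiv ℝ f) := hf.fderiv_right (by exact_mod_cast h)
  exact this.clm_apply contDiff_const

lemma ibp (f g : E3 → ℝ) (hf : ContDiff ℝ 1 f) (hg : ContDiff ℝ 1 g)
    (hsf : HasCompactSupport f) (i : Fin 3) :
    ∫ x, f x * pd g i x = - ∫ x, pd f i x * g x := by
  have cf' : Continuous (pd f i) := (contDiff_pd hf le_rfl i).continuous
  have cg' : Continuous (pd g i) := (contDiff_pd hg le_rfl i).continuous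
  have h1 : Integrable (fun x => pd f i x * g x) :=
    (cf'.mul hg.continuous).integrable_of_hasCompactSupport
      ((hasCompactSupport_pd hsf i).mul_right)
  have h2 : Integrable (fun x => f x * pd g i x) :=
    (hf.continuous.mul cg').integrable_of_hasCompactSupport hsf.mul_right
  have h3 : Integrable (fun x => f x * g x) :=
    (hf.continuous.mul hg.continuous).integrable_of_hasCompactSupport hsf.mul_right
  simp only [pd] at h1 h2 ⊢
  exact integral_mul_fderiv_eq_neg_fderiv_mul_of_integrable h1 h2 h3
    (fun x _ => hf.differentiable one_ne_zero x) (fun x _ => hg.differentiable one_ne_zero x)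

section pdrules

variable {f g : E3 → ℝ} {x : E3} {i : Fin 3}

lemma pd_add (hf : DifferentiableAt ℝ f x) (hg : DifferentiableAt ℝ g x) :
    pd (fun y => f y + g y) i x = pd f i x + pd g i x := by
  simp [pd, fderiv_fun_add hf hg]

lemma pd_const_mul (c : ℝ) (hf : DifferentiableAt ℝ f x) :
    pd (fun y => c * f y) i x = c * pd f i x := by
  simp [pd, fderiv_const_mul hf c]

lemma pd_mul (hf : DifferentiableAt ℝ f x) (hg : DifferentiableAt ℝ g x) :
    pd (fun y => f y * g y) i x = pd f i x * g x + f x * pd g i x := by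
  simp only [pd, fderiv_fun_mul hf hg, ContinuousLinearMap.add_apply,
    ContinuousLinearMap.smul_apply, smul_eq_mul]
  ring

lemma pd_sum {ι : Type*} (s : Finset ι) (F : ι → E3 → ℝ)
    (h : ∀ j ∈ s, DifferentiableAt ℝ (F j) x) :
    pd (fun y => ∑ j ∈ s, F j y) i x = ∑ j ∈ s, pd (F j) i x := by
  simp [pd, fderiv_fun_sum h]

lemma pd_sq (f : E3 → ℝ) {x : E3} (hf : DifferentiableAt ℝ f x) (i : Fin 3) :
    pd (fun y => (f y)^2) i x = 2 * f x * pd f i x := by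
  have h : (fun y => (f y)^2) = fun y => f y * f y := by funext y; ring
  rw [h, pd_mul hf hf]; ring

lemma pd_pd_comm (hf : ContDiff ℝ 2 f) (i j : Fin 3) (x : E3) :
    pd (pd f j) i x = pd (pd f i) j x := by
  have hd : DifferentiableAt ℝ (fderiv ℝ f) x :=
    ((hf.fderiv_right (m := 1) (by norm_num)).differentiable one_ne_zero).differentiableAt
  have e1 : ∀ a b : Fin 3, pd (pd f b) a x
      = fderiv ℝ (fderiv ℝ f) x (EuclideanSpace.single a 1) (EuclideanSpace.single b 1) := by
    intro a b
    show fderiv ℝ (fun y => fderiv ℝ f y (EuclideanSpace.single b 1)) x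
      (EuclideanSpace.single a 1) = _
    rw [fderiv_clm_apply hd (differentiableAt_const _)]
    simp
  rw [e1, e1]
  exact (hf.contDiffAt.isSymmSndFDerivAt (by simp)) _ _

lemma pd_coord (v : E3 → E3) (hv : DifferentiableAt ℝ v x) (i j : Fin 3) :
    pd (fun y => v y j) i x = (fderiv ℝ v x (EuclideanSpace.single i 1)) j := by
  rw [pd]
  have : fderiv ℝ (fun y => v y j) x = (EuclideanSpace.proj j).comp (fderiv ℝ v x) := by
    apply HasFDerivAt.fderiv
    exact ((EuclideanSpace.proj (𝕜 := ℝ) j).hasFDerivAt.comp x hv.hasFDerivAt)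
  rw [this]; rfl

end pdrules

/-- uniform-in-ε gradient estimate
`‖∇λ‖_{L²} ≤ (2/k) ‖∇G‖_{L²}` for compactly supported strong solutions of the
regularized transport equation `-εΔλ + kλ + v·∇λ + ½(div v)λ = G`, under the
smallness condition `2M + (C_S/2)|O|^{1/6} ‖Δ div v‖_{L²(O)} ≤ k` on the
ambient field and the Sobolev embedding hypothesis on `λ`. -/
theorem uniform_gradient_estimate
    (O : Set (EuclideanSpace ℝ (Fin 3))) (hOopen : IsOpen O)
    (hObdd : Bornology.IsBounded O)
    (k ε CS M : ℝ) (hk : 0 < k) (hε : 0 < ε) (hCS : 0 < CS) (hM : 0 ≤ M)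
    (v : EuclideanSpace ℝ (Fin 3) → EuclideanSpace ℝ (Fin 3)) (hv : ContDiff ℝ 3 v)
    (hjac : ∀ x ∈ O, ‖fderiv ℝ v x‖ ≤ M)
    (hsmall : 2 * M + (CS / 2) * (volume O).toReal ^ ((1 : ℝ) / 6)
        * (∫ x in O, (lap (divg v) x) ^ 2) ^ ((1 : ℝ) / 2) ≤ k)
    (l : EuclideanSpace ℝ (Fin 3) → ℝ)
    (hl : ContDiff ℝ 3 l) (hls : HasCompactSupport l) (hlO : tsupport l ⊆ O)
    (hsob : (∫ x, |l x| ^ (6 : ℕ)) ^ ((1 : ℝ) / 6)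
      ≤ Real.sqrt CS * (∫ x, ∑ i, (pd l i x) ^ 2) ^ ((1 : ℝ) / 2))
    (G : EuclideanSpace ℝ (Fin 3) → ℝ)
    (hG : G = fun x => -ε * lap l x + k * l x + (∑ i, v x i * pd l i x)
        + (1 / 2) * divg v x * l x) :
    (∫ x, ∑ i, (pd l i x) ^ 2) ^ ((1 : ℝ) / 2)
      ≤ (2 / k) * (∫ x, ∑ i, (pd G i x) ^ 2) ^ ((1 : ℝ) / 2) := by
  classical
  -- ## regularity facts
  have hl2 : ContDiff ℝ 2 l := hl.of_le (by norm_num)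
  have hl1 : ContDiff ℝ 1 l := hl.of_le (by norm_num)
  have hdl : ∀ i, ContDiff ℝ 2 (pd l i) := fun i => contDiff_pd (n := 3) hl (by norm_num) i
  have hdl1 : ∀ i, ContDiff ℝ 1 (pd l i) := fun i => (hdl i).of_le (by norm_num)
  have hddl : ∀ i j, ContDiff ℝ 1 (pd (pd l i) j) :=
    fun i j => contDiff_pd (n := 2) (hdl i) (by norm_num) j
  have hlapl : ContDiff ℝ 1 (lap l) := by
    have : ContDiff ℝ 1 (fun x => ∑ i, pd (pd l i) i x) := ContDiff.sum (fun i _ => hddl i i)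
    exact this
  have hvj : ∀ j, ContDiff ℝ 3 (fun y => v y j) :=
    fun j => (EuclideanSpace.proj (𝕜 := ℝ) j).contDiff.comp hv
  have hvj1 : ∀ j, ContDiff ℝ 1 (fun y => v y j) := fun j => (hvj j).of_le (by norm_num)
  have hdvj : ∀ j i, ContDiff ℝ 2 (pd (fun y => v y j) i) :=
    fun j i => contDiff_pd (n := 3) (hvj j) (by norm_num) i
  have hdivv : ContDiff ℝ 2 (divg v) := by
    have : ContDiff ℝ 2 (fun x => ∑ i, pd (fun y => v y i) i x) :=
      ContDiff.sum (fun i _ => hdvj i i)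
    exact this
  have hddivv : ∀ i, ContDiff ℝ 1 (pd (divg v) i) :=
    fun i => contDiff_pd (n := 2) hdivv (by norm_num) i
  have clapdivv : Continuous (lap (divg v)) := by
    have : Continuous (fun x => ∑ i, pd (pd (divg v) i) i x) :=
      continuous_finset_sum _
        (fun i _ => (contDiff_pd (n := 1) (m := 0) (hddivv i) (by norm_num) i).continuous)
    exact this
  have hQ : ContDiff ℝ 2 (fun x => ∑ m, (pd l m x)^2) :=
    ContDiff.sum (fun m _ => (hdl m).pow 2)
  have hQ1 : ContDiff ℝ 1 (fun x => ∑ m, (pd l m x)^2) := hQ.of_le (by norm_num)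
  have hsql : ContDiff ℝ 2 (fun x => (l x)^2) := hl2.pow 2
  have hsql1 : ContDiff ℝ 1 (fun x => (l x)^2) := hsql.of_le (by norm_num)
  -- ## continuity facts
  have cl : Continuous l := hl.continuous
  have cpdl : ∀ i, Continuous (pd l i) := fun i => (hdl i).continuous
  have cpddl : ∀ i j, Continuous (pd (pd l i) j) := fun i j => (hddl i j).continuous
  have clapl : Continuous (lap l) := hlapl.continuous
  have cpdlapl : ∀ i, Continuous (pd (lap l) i) :=
    fun i => (contDiff_pd (n := 1) (m := 0) hlapl le_rfl i).continuous
  have cvj : ∀ j, Continuous (fun y => v y j) := fun j => (hvj j).continuous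
  have cpdvj : ∀ j i, Continuous (pd (fun y => v y j) i) := fun j i => (hdvj j i).continuous
  have cdivv : Continuous (divg v) := hdivv.continuous
  have cpddivv : ∀ i, Continuous (pd (divg v) i) := fun i => (hddivv i).continuous
  have cpdQ : ∀ j, Continuous (pd (fun x => ∑ m, (pd l m x)^2) j) :=
    fun j => (contDiff_pd (n := 2) (m := 0) hQ (by norm_num) j).continuous
  have cpdsql : ∀ i, Continuous (pd (fun x => (l x)^2) i) :=
    fun i => (contDiff_pd (n := 2) (m := 0) hsql (by norm_num) i).continuous
  have cpddivvi : ∀ i j, Continuous (pd (pd (divg v) i) j) :=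
    fun i j => (contDiff_pd (n := 1) (m := 0) (hddivv i) (by norm_num) j).continuous
  -- ## vanishing off the support of l
  have h0 : ∀ x, x ∉ tsupport l → l x = 0 := fun x hx => image_eq_zero_of_notMem_tsupport hx
  have hsupp_pd : ∀ (f : E3 → ℝ), (∀ x, x ∉ tsupport l → f x = 0) →
      ∀ (j : Fin 3) (x : E3), x ∉ tsupport l → pd f j x = 0 := by
    intro f hf j x hx
    have hsub : tsupport f ⊆ tsupport l :=
      closure_minimal (fun y hy => by
        by_contra hc
        exact hy (hf y hc)) (isClosed_tsupport l)
    by_contra hne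
    exact hx (hsub (support_pd_subset f j hne))
  have h0pd : ∀ (i : Fin 3) x, x ∉ tsupport l → pd l i x = 0 := fun i => hsupp_pd l h0 i
  have h0pdd : ∀ (i j : Fin 3) x, x ∉ tsupport l → pd (pd l i) j x = 0 :=
    fun i j => hsupp_pd (pd l i) (fun x hx => h0pd i x hx) j
  have h0lap : ∀ x, x ∉ tsupport l → lap l x = 0 := by
    intro x hx
    show (∑ i, pd (pd l i) i x) = 0
    exact Finset.sum_eq_zero fun i _ => h0pdd i i x hx
  have h0pdlap : ∀ (i : Fin 3) x, x ∉ tsupport l → pd (lap l) i x = 0 :=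
    fun i => hsupp_pd (lap l) h0lap i
  have h0Q : ∀ x, x ∉ tsupport l → (∑ m, (pd l m x)^2) = 0 := fun x hx =>
    Finset.sum_eq_zero fun m _ => by rw [h0pd m x hx]; ring
  have h0pdQ : ∀ (j : Fin 3) x, x ∉ tsupport l → pd (fun y => ∑ m, (pd l m y)^2) j x = 0 :=
    fun j => hsupp_pd _ h0Q j
  have h0sql : ∀ x, x ∉ tsupport l → (l x)^2 = 0 := fun x hx => by rw [h0 x hx]; ring
  have h0pdsql : ∀ (i : Fin 3) x, x ∉ tsupport l → pd (fun y => (l y)^2) i x = 0 :=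
    fun i => hsupp_pd _ h0sql i
  -- ## compact support and integrability machine
  have csOf : ∀ (f : E3 → ℝ), (∀ x, x ∉ tsupport l → f x = 0) → HasCompactSupport f :=
    fun f hf => hls.mono' (fun x hx => by
      by_contra hc
      exact hx (hf x hc))
  have intOf : ∀ (f : E3 → ℝ), Continuous f → (∀ x, x ∉ tsupport l → f x = 0) → Integrable f :=
    fun f hc hf => hc.integrable_of_hasCompactSupport (csOf f hf)
  -- ## smoothness and support of G
  have hGC1 : ContDiff ℝ 1 G := by
    rw [hG]
    apply ContDiff.add
    apply ContDiff.add
    apply ContDiff.add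
    · exact contDiff_const.mul hlapl
    · exact contDiff_const.mul hl1
    · exact ContDiff.sum fun j _ => (hvj1 j).mul (hdl1 j)
    · exact (contDiff_const.mul (hdivv.of_le (by norm_num))).mul hl1
  have cpdG : ∀ i, Continuous (pd G i) :=
    fun i => (contDiff_pd (n := 1) (m := 0) hGC1 le_rfl i).continuous
  have h0G : ∀ x, x ∉ tsupport l → G x = 0 := by
    intro x hx
    rw [hG]
    simp [h0 x hx, h0lap x hx, fun i : Fin 3 => h0pd i x hx]
  have h0pdG : ∀ (i : Fin 3) x, x ∉ tsupport l → pd G i x = 0 := fun i => hsupp_pd G h0G i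
  -- ## pointwise formula for the gradient of G (with symmetrized second derivatives)
  have hpdG : ∀ (i : Fin 3) (x : E3), pd G i x =
      -ε * pd (lap l) i x + k * pd l i x
      + (∑ j, (pd (fun y => v y j) i x * pd l j x + v x j * pd (pd l i) j x))
      + ((1/2) * pd (divg v) i x * l x + (1/2) * divg v x * pd l i x) := by
    intro i x
    have dlapl : DifferentiableAt ℝ (lap l) x := (hlapl.differentiable one_ne_zero) x
    have dl : DifferentiableAt ℝ l x := (hl1.differentiable one_ne_zero) x
    have ddivv : DifferentiableAt ℝ (divg v) x := (hdivv.differentiable (by norm_num)) x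
    have dA : DifferentiableAt ℝ (fun y => -ε * lap l y) x := dlapl.const_mul _
    have dB : DifferentiableAt ℝ (fun y => k * l y) x := dl.const_mul _
    have dCj : ∀ j : Fin 3, DifferentiableAt ℝ (fun y => v y j * pd l j y) x := fun j =>
      (((hvj1 j).differentiable one_ne_zero) x).mul (((hdl1 j).differentiable one_ne_zero) x)
    have dC : DifferentiableAt ℝ (fun y => ∑ j, v y j * pd l j y) x :=
      DifferentiableAt.fun_sum (fun j _ => dCj j)
    have dD2 : DifferentiableAt ℝ (fun y => 1/2 * divg v y) x := ddivv.const_mul _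
    have dD : DifferentiableAt ℝ (fun y => 1/2 * divg v y * l y) x := dD2.mul dl
    rw [hG]
    rw [pd_add (f := fun y => -ε * lap l y + k * l y + ∑ j, v y j * pd l j y)
        (g := fun y => 1/2 * divg v y * l y) ((dA.add dB).add dC) dD]
    rw [pd_add (f := fun y => -ε * lap l y + k * l y)
        (g := fun y => ∑ j, v y j * pd l j y) (dA.add dB) dC]
    rw [pd_add (f := fun y => -ε * lap l y) (g := fun y => k * l y) dA dB]
    rw [pd_const_mul (f := lap l) (-ε) dlapl]
    rw [pd_const_mul (f := l) k dl]
    rw [pd_sum Finset.univ (fun j => fun y => v y j * pd l j y) (fun j _ => dCj j)]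
    rw [pd_mul (f := fun y => 1/2 * divg v y) (g := l) dD2 dl]
    rw [pd_const_mul (f := divg v) (1/2) ddivv]
    have hsum : (∑ j, pd (fun y => v y j * pd l j y) i x)
        = ∑ j, (pd (fun y => v y j) i x * pd l j x + v x j * pd (pd l i) j x) := by
      refine Finset.sum_congr rfl fun j _ => ?_
      rw [pd_mul (f := fun y => v y j) (g := pd l j)
        (((hvj1 j).differentiable one_ne_zero) x) (((hdl1 j).differentiable one_ne_zero) x)]
      rw [pd_pd_comm hl2 i j x]
    rw [hsum]
  -- pd of the square of l, and of the squared gradient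
  have hsq : ∀ (ii : Fin 3) (x : E3), pd (fun y => (l y)^2) ii x = 2 * l x * pd l ii x :=
    fun ii x => pd_sq l ((hl1.differentiable one_ne_zero) x) ii
  have hQj : ∀ (jj : Fin 3) (x : E3), pd (fun y => ∑ m, (pd l m y)^2) jj x
      = ∑ m, 2 * pd l m x * pd (pd l m) jj x := by
    intro jj x
    rw [pd_sum Finset.univ (fun m => fun y => (pd l m y)^2)
      (fun m _ => (((hdl1 m).differentiable one_ne_zero) x).pow 2)]
    exact Finset.sum_congr rfl fun m _ => pd_sq (pd l m) (((hdl1 m).differentiable one_ne_zero) x) jj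
  -- ## pointwise expansion of the integrand ∑ ∂ᵢG ∂ᵢl
  have hptwise : ∀ x : E3, (∑ i, pd G i x * pd l i x) =
      (-ε * ∑ i, pd (lap l) i x * pd l i x)
      + ((k * ∑ i, (pd l i x)^2)
      + ((∑ i, ∑ j, pd (fun y => v y j) i x * pd l j x * pd l i x)
      + ((∑ j, v x j * ((1/2) * pd (fun y => ∑ m, (pd l m y)^2) j x))
      + ((∑ i, (1/4) * pd (divg v) i x * pd (fun y => (l y)^2) i x)
      + ((1/2) * divg v x * ∑ i, (pd l i x)^2))))) := by
    intro x
    have h4 : (∑ j, v x j * ((1/2) * pd (fun y => ∑ m, (pd l m y)^2) j x))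
        = ∑ j, v x j * ((1/2) * ∑ m, 2 * pd l m x * pd (pd l m) j x) :=
      Finset.sum_congr rfl fun j _ => by rw [hQj j x]
    have h5 : (∑ i, (1/4) * pd (divg v) i x * pd (fun y => (l y)^2) i x)
        = ∑ i, (1/4) * pd (divg v) i x * (2 * l x * pd l i x) :=
      Finset.sum_congr rfl fun i _ => by rw [hsq i x]
    rw [h4, h5]
    simp only [hpdG]
    simp only [Fin.sum_univ_three]
    ring
  -- ## integrability of the pieces
  have iT1 : Integrable (fun x => -ε * ∑ i, pd (lap l) i x * pd l i x) :=
    intOf _ (continuous_const.mul (continuous_finset_sum _ fun i _ => (cpdlapl i).mul (cpdl i)))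
      (fun x hx => by
        rw [Finset.sum_eq_zero fun i _ => by rw [h0pd i x hx, mul_zero]]; ring)
  have iT2 : Integrable (fun x => k * ∑ i, (pd l i x)^2) :=
    intOf _ (continuous_const.mul (continuous_finset_sum _ fun i _ => (cpdl i).pow 2))
      (fun x hx => by rw [h0Q x hx]; ring)
  have iT3 : Integrable (fun x => ∑ i, ∑ j, pd (fun y => v y j) i x * pd l j x * pd l i x) :=
    intOf _ (continuous_finset_sum _ fun i _ => continuous_finset_sum _ fun j _ =>
        ((cpdvj j i).mul (cpdl j)).mul (cpdl i))
      (fun x hx => Finset.sum_eq_zero fun i _ => Finset.sum_eq_zero fun j _ => by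
        rw [h0pd i x hx, mul_zero])
  have iT4j : ∀ j : Fin 3, Integrable (fun x => v x j * ((1/2) * pd (fun y => ∑ m, (pd l m y)^2) j x)) :=
    fun j => intOf _ ((cvj j).mul (continuous_const.mul (cpdQ j)))
      (fun x hx => by rw [h0pdQ j x hx]; ring)
  have iT4 : Integrable (fun x => ∑ j, v x j * ((1/2) * pd (fun y => ∑ m, (pd l m y)^2) j x)) :=
    intOf _ (continuous_finset_sum _ fun j _ => (cvj j).mul (continuous_const.mul (cpdQ j)))
      (fun x hx => Finset.sum_eq_zero fun j _ => by rw [h0pdQ j x hx]; ring)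
  have iT5i : ∀ i : Fin 3, Integrable (fun x => (1/4) * pd (divg v) i x * pd (fun y => (l y)^2) i x) :=
    fun i => intOf _ ((continuous_const.mul (cpddivv i)).mul (cpdsql i))
      (fun x hx => by rw [h0pdsql i x hx]; ring)
  have iT5 : Integrable (fun x => ∑ i, (1/4) * pd (divg v) i x * pd (fun y => (l y)^2) i x) :=
    intOf _ (continuous_finset_sum _ fun i _ => (continuous_const.mul (cpddivv i)).mul (cpdsql i))
      (fun x hx => Finset.sum_eq_zero fun i _ => by rw [h0pdsql i x hx]; ring)
  have iT6 : Integrable (fun x => (1/2) * divg v x * ∑ i, (pd l i x)^2) :=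
    intOf _ ((continuous_const.mul cdivv).mul (continuous_finset_sum _ fun i _ => (cpdl i).pow 2))
      (fun x hx => by rw [h0Q x hx]; ring)
  have iC1 : ∀ i : Fin 3, Integrable (fun x => pd (lap l) i x * pd l i x) :=
    fun i => intOf _ ((cpdlapl i).mul (cpdl i)) (fun x hx => by rw [h0pd i x hx, mul_zero])
  have iC1' : ∀ i : Fin 3, Integrable (fun x => lap l x * pd (pd l i) i x) :=
    fun i => intOf _ (clapl.mul (cpddl i i)) (fun x hx => by rw [h0lap x hx, zero_mul])
  have iC4 : ∀ j : Fin 3, Integrable (fun x => (∑ m, (pd l m x)^2) * pd (fun y => v y j) j x) :=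
    fun j => intOf _ ((continuous_finset_sum _ fun m _ => (cpdl m).pow 2).mul (cpdvj j j))
      (fun x hx => by rw [h0Q x hx, zero_mul])
  have iC5 : ∀ i : Fin 3, Integrable (fun x => (l x)^2 * pd (pd (divg v) i) i x) :=
    fun i => intOf _ ((cl.pow 2).mul (cpddivvi i i))
      (fun x hx => by rw [h0sql x hx, zero_mul])
  -- ## the main integral identity
  have key : ∫ x, ∑ i, pd G i x * pd l i x
      = ε * (∫ x, (lap l x)^2)
        + k * (∫ x, ∑ i, (pd l i x)^2)
        + (∫ x, ∑ i, ∑ j, pd (fun y => v y j) i x * pd l j x * pd l i x)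
        - (1/4) * (∫ x, lap (divg v) x * (l x)^2) := by
    have step0 : ∫ x, ∑ i, pd G i x * pd l i x
        = (∫ x, -ε * ∑ i, pd (lap l) i x * pd l i x)
          + ((∫ x, k * ∑ i, (pd l i x)^2)
          + ((∫ x, ∑ i, ∑ j, pd (fun y => v y j) i x * pd l j x * pd l i x)
          + ((∫ x, ∑ j, v x j * ((1/2) * pd (fun y => ∑ m, (pd l m y)^2) j x))
          + ((∫ x, ∑ i, (1/4) * pd (divg v) i x * pd (fun y => (l y)^2) i x)
          + (∫ x, (1/2) * divg v x * ∑ i, (pd l i x)^2))))) := by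
      simp only [hptwise]
      have i56 : Integrable (fun x => (∑ i, (1/4) * pd (divg v) i x * pd (fun y => (l y)^2) i x) + ((1/2) * divg v x * ∑ i, (pd l i x)^2)) := by exact iT5.add iT6
      have i456 : Integrable (fun x => (∑ j, v x j * ((1/2) * pd (fun y => ∑ m, (pd l m y)^2) j x)) + ((∑ i, (1/4) * pd (divg v) i x * pd (fun y => (l y)^2) i x) + ((1/2) * divg v x * ∑ i, (pd l i x)^2))) := by exact iT4.add i56
      have i3456 : Integrable (fun x => (∑ i, ∑ j, pd (fun y => v y j) i x * pd l j x * pd l i x) + ((∑ j, v x j * ((1/2) * pd (fun y => ∑ m, (pd l m y)^2) j x)) + ((∑ i, (1/4) * pd (divg v) i x * pd (fun y => (l y)^2) i x) + ((1/2) * divg v x * ∑ i, (pd l i x)^2)))) := by exact iT3.add i456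
      have i23456 : Integrable (fun x => (k * ∑ i, (pd l i x)^2) + ((∑ i, ∑ j, pd (fun y => v y j) i x * pd l j x * pd l i x) + ((∑ j, v x j * ((1/2) * pd (fun y => ∑ m, (pd l m y)^2) j x)) + ((∑ i, (1/4) * pd (divg v) i x * pd (fun y => (l y)^2) i x) + ((1/2) * divg v x * ∑ i, (pd l i x)^2))))) := by
        exact iT2.add i3456
      rw [integral_add iT1 i23456, integral_add iT2 i3456, integral_add iT3 i456,
        integral_add iT4 i56, integral_add iT5 iT6]
    -- evaluate piece 1 by parts
    have c1 : (∫ x, -ε * ∑ i, pd (lap l) i x * pd l i x) = ε * (∫ x, (lap l x)^2) := by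
      rw [integral_const_mul]
      rw [integral_finset_sum _ (fun i _ => iC1 i)]
      have e1 : ∀ i : Fin 3, (∫ x, pd (lap l) i x * pd l i x)
          = - ∫ x, lap l x * pd (pd l i) i x := by
        intro i
        have h := ibp (lap l) (pd l i) hlapl (hdl1 i) (csOf (lap l) h0lap) i
        linarith
      rw [Finset.sum_congr rfl (fun i _ => e1 i)]
      rw [Finset.sum_neg_distrib, ← integral_finset_sum _ (fun i _ => iC1' i)]
      have e2 : ∀ x : E3, (∑ i, lap l x * pd (pd l i) i x) = (lap l x)^2 := by
        intro x
        rw [← Finset.mul_sum]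
        show lap l x * lap l x = _
        ring
      simp only [e2]
      ring
    -- evaluate piece 2
    have c2 : (∫ x, k * ∑ i, (pd l i x)^2) = k * (∫ x, ∑ i, (pd l i x)^2) :=
      integral_const_mul _ _
    -- evaluate piece 4 by parts
    have c4 : (∫ x, ∑ j, v x j * ((1/2) * pd (fun y => ∑ m, (pd l m y)^2) j x))
        = -(1/2) * ∫ x, divg v x * ∑ i, (pd l i x)^2 := by
      rw [integral_finset_sum _ (fun j _ => iT4j j)]
      have e4 : ∀ j : Fin 3, (∫ x, v x j * ((1/2) * pd (fun y => ∑ m, (pd l m y)^2) j x))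
          = -(1/2) * ∫ x, (∑ m, (pd l m x)^2) * pd (fun y => v y j) j x := by
        intro j
        have hibp := ibp (fun y => ∑ m, (pd l m y)^2) (fun y => v y j) hQ1 (hvj1 j)
          (csOf _ h0Q) j
        have hcomm : (∫ x, v x j * ((1/2) * pd (fun y => ∑ m, (pd l m y)^2) j x))
            = (1/2) * ∫ x, pd (fun y => ∑ m, (pd l m y)^2) j x * v x j := by
          rw [← integral_const_mul]
          congr 1
          funext x
          ring
        rw [hcomm]
        rw [show (∫ x, pd (fun y => ∑ m, (pd l m y)^2) j x * v x j)
          = - ∫ x, (∑ m, (pd l m x)^2) * pd (fun y => v y j) j x by linarith]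
        ring
      rw [Finset.sum_congr rfl (fun j _ => e4 j)]
      rw [← Finset.mul_sum]
      rw [← integral_finset_sum _ (fun j _ => iC4 j)]
      congr 1
      congr 1
      funext x
      rw [← Finset.mul_sum]
      show (∑ m, (pd l m x)^2) * divg v x = _
      ring
    -- evaluate piece 5 by parts
    have c5 : (∫ x, ∑ i, (1/4) * pd (divg v) i x * pd (fun y => (l y)^2) i x)
        = -(1/4) * (∫ x, lap (divg v) x * (l x)^2) := by
      rw [integral_finset_sum _ (fun i _ => iT5i i)]
      have e5 : ∀ i : Fin 3, (∫ x, (1/4) * pd (divg v) i x * pd (fun y => (l y)^2) i x)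
          = -(1/4) * ∫ x, (l x)^2 * pd (pd (divg v) i) i x := by
        intro i
        have hibp := ibp (fun y => (l y)^2) (pd (divg v) i) hsql1 (hddivv i)
          (csOf _ h0sql) i
        have hcomm : (∫ x, (1/4) * pd (divg v) i x * pd (fun y => (l y)^2) i x)
            = (1/4) * ∫ x, pd (fun y => (l y)^2) i x * pd (divg v) i x := by
          rw [← integral_const_mul]
          congr 1
          funext x
          ring
        rw [hcomm]
        rw [show (∫ x, pd (fun y => (l y)^2) i x * pd (divg v) i x)
          = - ∫ x, (l x)^2 * pd (pd (divg v) i) i x by linarith]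
        ring
      rw [Finset.sum_congr rfl (fun i _ => e5 i)]
      rw [← Finset.mul_sum]
      rw [← integral_finset_sum _ (fun i _ => iC5 i)]
      congr 1
      congr 1
      funext x
      rw [← Finset.mul_sum]
      show (l x)^2 * lap (divg v) x = _
      ring
    -- evaluate piece 6
    have c6 : (∫ x, (1/2) * divg v x * ∑ i, (pd l i x)^2)
        = (1/2) * ∫ x, divg v x * ∑ i, (pd l i x)^2 := by
      rw [← integral_const_mul]
      congr 1
      funext x
      ring
    rw [step0, c1, c2, c4, c5, c6]
    ring
  -- ## bound on the Jacobian term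
  have hJpt : ∀ x : E3, |∑ i, ∑ j, pd (fun y => v y j) i x * pd l j x * pd l i x|
      ≤ M * ∑ i, (pd l i x)^2 := by
    intro x
    by_cases hx : x ∈ O
    · have hdvx : DifferentiableAt ℝ v x := hv.differentiable (by norm_num) x
      set w : Fin 3 → ℝ := fun j => pd l j x with hw
      have hJeq : (∑ i, ∑ j, pd (fun y => v y j) i x * pd l j x * pd l i x)
          = @inner ℝ _ _ ((fderiv ℝ v x) (vecOf w)) (vecOf w) := by
        have h1 : (fderiv ℝ v x) (vecOf w)
            = ∑ jj, w jj • (fderiv ℝ v x) (EuclideanSpace.single jj 1) := by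
          rw [vecOf, map_sum]
          simp
        rw [h1, sum_inner]
        refine Finset.sum_congr rfl fun a _ => ?_
        rw [real_inner_smul_left, inner_vecOf, Finset.mul_sum]
        refine Finset.sum_congr rfl fun b _ => ?_
        rw [pd_coord v hdvx a b]
        ring
      rw [hJeq]
      have hnormw : ‖vecOf w‖ * ‖vecOf w‖ = ∑ i, (pd l i x)^2 := by
        rw [← real_inner_self_eq_norm_mul_norm, inner_vecOf]
        exact Finset.sum_congr rfl fun i _ => by rw [vecOf_apply]; ring
      calc |@inner ℝ _ _ ((fderiv ℝ v x) (vecOf w)) (vecOf w)|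
          ≤ ‖(fderiv ℝ v x) (vecOf w)‖ * ‖vecOf w‖ := abs_real_inner_le_norm _ _
        _ ≤ (M * ‖vecOf w‖) * ‖vecOf w‖ := by
            apply mul_le_mul_of_nonneg_right _ (norm_nonneg _)
            calc ‖(fderiv ℝ v x) (vecOf w)‖ ≤ ‖fderiv ℝ v x‖ * ‖vecOf w‖ :=
                (fderiv ℝ v x).le_opNorm (vecOf w)
              _ ≤ M * ‖vecOf w‖ := mul_le_mul_of_nonneg_right (hjac x hx) (norm_nonneg _)
        _ = M * (‖vecOf w‖ * ‖vecOf w‖) := by ring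
        _ = M * ∑ i, (pd l i x)^2 := by rw [hnormw]
    · have hxt : x ∉ tsupport l := fun hc => hx (hlO hc)
      have hz : ∀ i : Fin 3, pd l i x = 0 := fun i => h0pd i x hxt
      simp [hz]
  have iQ : Integrable (fun x => ∑ i, (pd l i x)^2) :=
    intOf _ (continuous_finset_sum _ fun i _ => (cpdl i).pow 2) h0Q
  have hJ : |∫ x, ∑ i, ∑ j, pd (fun y => v y j) i x * pd l j x * pd l i x|
      ≤ M * ∫ x, ∑ i, (pd l i x)^2 := by
    calc |∫ x, ∑ i, ∑ j, pd (fun y => v y j) i x * pd l j x * pd l i x|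
        ≤ ∫ x, |∑ i, ∑ j, pd (fun y => v y j) i x * pd l j x * pd l i x| := by
          simpa [Real.norm_eq_abs] using
            norm_integral_le_integral_norm
              (fun x => ∑ i, ∑ j, pd (fun y => v y j) i x * pd l j x * pd l i x)
      _ ≤ ∫ x, M * ∑ i, (pd l i x)^2 := integral_mono iT3.abs (iQ.const_mul M)
          (fun x => hJpt x)
      _ = M * ∫ x, ∑ i, (pd l i x)^2 := integral_const_mul _ _
  -- ## bound on the third-derivative term, via Cauchy-Schwarz and Hölder
  haveI hfinO : IsFiniteMeasure (volume.restrict O) :=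
    ⟨by rw [Measure.restrict_apply_univ]; exact hObdd.measure_lt_top⟩
  have hO1 : ∀ x, x ∉ O → l x = 0 := fun x hx => h0 x (fun hc => hx (hlO hc))
  have hN0 : (0:ℝ) ≤ ∫ x, ∑ i, (pd l i x)^2 :=
    integral_nonneg fun x => Finset.sum_nonneg fun i _ => sq_nonneg _
  have hS0 : (0:ℝ) ≤ (∫ x in O, (lap (divg v) x) ^ 2) ^ ((1:ℝ)/2) :=
    Real.rpow_nonneg (integral_nonneg fun x => sq_nonneg _) _
  have hV0 : (0:ℝ) ≤ (volume O).toReal ^ ((1:ℝ)/6) :=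
    Real.rpow_nonneg ENNReal.toReal_nonneg _
  -- Hölder: ∫_O l⁴ ≤ (∫ |l|⁶)^(2/3) * |O|^(1/3)
  have hL6eq : (∫ x in O, |l x| ^ (6:ℕ)) = ∫ x, |l x| ^ (6:ℕ) :=
    setIntegral_eq_integral_of_forall_compl_eq_zero (fun x hx => by rw [hO1 x hx]; simp)
  have hHolder : (∫ x in O, (l x)^4)
      ≤ (∫ x, |l x| ^ (6:ℕ)) ^ ((2:ℝ)/3) * (volume O).toReal ^ ((1:ℝ)/3) := by
    have hconj : Real.HolderConjugate (3/2) 3 := Real.holderConjugate_iff.mpr ⟨by norm_num, by norm_num⟩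
    have hmem1 : MemLp (fun x => (l x)^4) (ENNReal.ofReal (3/2)) (volume.restrict O) :=
      ((cl.pow 4).memLp_of_hasCompactSupport
        (csOf _ (fun x hx => by rw [Pi.pow_apply, h0 x hx]; ring))).restrict O
    have hmem2 : MemLp (fun _ : EuclideanSpace ℝ (Fin 3) => (1:ℝ)) (ENNReal.ofReal 3)
        (volume.restrict O) := memLp_const 1
    have hH := integral_mul_le_Lp_mul_Lq_of_nonneg (μ := volume.restrict O) hconj
      (f := fun x => (l x)^4) (g := fun _ => (1:ℝ))
      (Filter.Eventually.of_forall fun x => by positivity)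
      (Filter.Eventually.of_forall fun x => zero_le_one)
      hmem1 hmem2
    simp only [mul_one] at hH
    have e1 : (∫ x in O, ((l x)^4) ^ ((3:ℝ)/2)) = ∫ x in O, |l x| ^ (6:ℕ) := by
      refine integral_congr_ae (Filter.Eventually.of_forall fun x => ?_)
      dsimp only
      have h1 : ((l x)^4 : ℝ) = |l x| ^ (4:ℕ) := by
        rw [pow_abs, abs_of_nonneg (by positivity)]
      rw [h1, ← Real.rpow_natCast |l x| 4, ← Real.rpow_mul (abs_nonneg _)]
      rw [show ((4:ℕ):ℝ) * ((3:ℝ)/2) = ((6:ℕ):ℝ) by norm_num, Real.rpow_natCast]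
    have e2 : (∫ x in O, ((1:ℝ)) ^ (3:ℝ)) = (volume O).toReal := by
      simp [Measure.real]
    have e3 : ((1:ℝ)/(3/2)) = (2:ℝ)/3 := by norm_num
    have e4 : ((1:ℝ)/3) = (1:ℝ)/3 := rfl
    calc (∫ x in O, (l x)^4)
        ≤ (∫ x in O, ((l x)^4) ^ ((3:ℝ)/2)) ^ ((1:ℝ)/(3/2))
          * (∫ x in O, ((1:ℝ)) ^ (3:ℝ)) ^ ((1:ℝ)/3) := hH
      _ = (∫ x, |l x| ^ (6:ℕ)) ^ ((2:ℝ)/3) * (volume O).toReal ^ ((1:ℝ)/3) := by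
          rw [e1, e2, e3, hL6eq]
  -- Cauchy-Schwarz on O for the third-derivative term
  have hCSO : |∫ x in O, lap (divg v) x * (l x)^2|
      ≤ (∫ x in O, (lap (divg v) x)^2) ^ ((1:ℝ)/2) * (∫ x in O, (l x)^4) ^ ((1:ℝ)/2) := by
    have hconj : Real.HolderConjugate 2 2 := Real.holderConjugate_iff.mpr ⟨by norm_num, by norm_num⟩
    obtain ⟨C, hC⟩ := (hObdd.isCompact_closure).exists_bound_of_continuousOn
      (clapdivv.continuousOn)
    have hmem1 : MemLp (fun x => |lap (divg v) x|) (ENNReal.ofReal 2) (volume.restrict O) := by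
      have htop : MemLp (fun x => |lap (divg v) x|) ⊤ (volume.restrict O) := by
        apply memLp_top_of_bound (clapdivv.abs.aestronglyMeasurable) C
        refine (ae_restrict_mem hOopen.measurableSet).mono fun x hx => ?_
        simpa [Real.norm_eq_abs, abs_abs] using hC x (subset_closure hx)
      exact htop.mono_exponent le_top
    have hmem2 : MemLp (fun x => (l x)^2) (ENNReal.ofReal 2) (volume.restrict O) :=
      ((cl.pow 2).memLp_of_hasCompactSupport
        (csOf _ (fun x hx => by rw [Pi.pow_apply, h0 x hx]; ring))).restrict O
    have hH := integral_mul_le_Lp_mul_Lq_of_nonneg (μ := volume.restrict O) hconj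
      (f := fun x => |lap (divg v) x|) (g := fun x => (l x)^2)
      (Filter.Eventually.of_forall fun x => abs_nonneg _)
      (Filter.Eventually.of_forall fun x => sq_nonneg _)
      hmem1 hmem2
    have e1 : (∫ x in O, (|lap (divg v) x|) ^ (2:ℝ)) = ∫ x in O, (lap (divg v) x)^2 := by
      refine integral_congr_ae (Filter.Eventually.of_forall fun x => ?_)
      dsimp only
      rw [show ((2:ℝ)) = ((2:ℕ):ℝ) by norm_num, Real.rpow_natCast, sq_abs]
    have e2 : (∫ x in O, ((l x)^2) ^ (2:ℝ)) = ∫ x in O, (l x)^4 := by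
      refine integral_congr_ae (Filter.Eventually.of_forall fun x => ?_)
      dsimp only
      rw [show ((2:ℝ)) = ((2:ℕ):ℝ) by norm_num, Real.rpow_natCast]
      ring
    calc |∫ x in O, lap (divg v) x * (l x)^2|
        ≤ ∫ x in O, |lap (divg v) x * (l x)^2| := by
          simpa only [Real.norm_eq_abs] using
            norm_integral_le_integral_norm (μ := volume.restrict O)
              (fun x => lap (divg v) x * (l x)^2)
      _ = ∫ x in O, |lap (divg v) x| * (l x)^2 := by
          refine integral_congr_ae (Filter.Eventually.of_forall fun x => ?_)
          dsimp only
          rw [abs_mul, abs_of_nonneg (sq_nonneg (l x))]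
      _ ≤ (∫ x in O, (|lap (divg v) x|) ^ (2:ℝ)) ^ ((1:ℝ)/2)
          * (∫ x in O, ((l x)^2) ^ (2:ℝ)) ^ ((1:ℝ)/2) := hH
      _ = (∫ x in O, (lap (divg v) x)^2) ^ ((1:ℝ)/2) * (∫ x in O, (l x)^4) ^ ((1:ℝ)/2) := by
          rw [e1, e2]
  -- chain: (∫_O l⁴)^(1/2) ≤ CS * N * |O|^(1/6)
  have hL60 : (0:ℝ) ≤ ∫ x, |l x| ^ (6:ℕ) := integral_nonneg fun x => by positivity
  have hL40 : (0:ℝ) ≤ ∫ x in O, (l x)^4 := integral_nonneg fun x => by positivity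
  have hL4half : (∫ x in O, (l x)^4) ^ ((1:ℝ)/2)
      ≤ CS * (∫ x, ∑ i, (pd l i x)^2) * (volume O).toReal ^ ((1:ℝ)/6) := by
    have s1 : (∫ x in O, (l x)^4) ^ ((1:ℝ)/2)
        ≤ ((∫ x, |l x| ^ (6:ℕ)) ^ ((2:ℝ)/3) * (volume O).toReal ^ ((1:ℝ)/3)) ^ ((1:ℝ)/2) :=
      Real.rpow_le_rpow hL40 hHolder (by norm_num)
    have s2 : ((∫ x, |l x| ^ (6:ℕ)) ^ ((2:ℝ)/3) * (volume O).toReal ^ ((1:ℝ)/3)) ^ ((1:ℝ)/2)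
        = (∫ x, |l x| ^ (6:ℕ)) ^ ((1:ℝ)/3) * (volume O).toReal ^ ((1:ℝ)/6) := by
      rw [Real.mul_rpow (Real.rpow_nonneg hL60 _) (Real.rpow_nonneg ENNReal.toReal_nonneg _)]
      rw [← Real.rpow_mul hL60, ← Real.rpow_mul ENNReal.toReal_nonneg]
      norm_num
    have s3 : (∫ x, |l x| ^ (6:ℕ)) ^ ((1:ℝ)/3)
        = ((∫ x, |l x| ^ (6:ℕ)) ^ ((1:ℝ)/6)) ^ (2:ℕ) := by
      rw [← Real.rpow_natCast ((∫ x, |l x| ^ (6:ℕ)) ^ ((1:ℝ)/6)) 2, ← Real.rpow_mul hL60]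
      norm_num
    have s4 : ((∫ x, |l x| ^ (6:ℕ)) ^ ((1:ℝ)/6)) ^ (2:ℕ)
        ≤ (Real.sqrt CS * (∫ x, ∑ i, (pd l i x)^2) ^ ((1:ℝ)/2)) ^ (2:ℕ) :=
      pow_le_pow_left₀ (Real.rpow_nonneg hL60 _) hsob 2
    have s5 : (Real.sqrt CS * (∫ x, ∑ i, (pd l i x)^2) ^ ((1:ℝ)/2)) ^ (2:ℕ)
        = CS * (∫ x, ∑ i, (pd l i x)^2) := by
      rw [mul_pow, Real.sq_sqrt hCS.le]
      congr 1
      rw [← Real.rpow_natCast ((∫ x, ∑ i, (pd l i x)^2) ^ ((1:ℝ)/2)) 2, ← Real.rpow_mul hN0]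
      norm_num
    calc (∫ x in O, (l x)^4) ^ ((1:ℝ)/2)
        ≤ ((∫ x, |l x| ^ (6:ℕ)) ^ ((2:ℝ)/3) * (volume O).toReal ^ ((1:ℝ)/3)) ^ ((1:ℝ)/2) := s1
      _ = (∫ x, |l x| ^ (6:ℕ)) ^ ((1:ℝ)/3) * (volume O).toReal ^ ((1:ℝ)/6) := s2
      _ = ((∫ x, |l x| ^ (6:ℕ)) ^ ((1:ℝ)/6)) ^ (2:ℕ) * (volume O).toReal ^ ((1:ℝ)/6) := by
          rw [s3]
      _ ≤ (CS * (∫ x, ∑ i, (pd l i x)^2)) * (volume O).toReal ^ ((1:ℝ)/6) := by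
          apply mul_le_mul_of_nonneg_right _ hV0
          rw [← s5]
          exact s4
      _ = CS * (∫ x, ∑ i, (pd l i x)^2) * (volume O).toReal ^ ((1:ℝ)/6) := by ring
  -- transfer the whole-space integral of the third-derivative term to O
  have hReq : (∫ x, lap (divg v) x * (l x)^2) = ∫ x in O, lap (divg v) x * (l x)^2 :=
    (setIntegral_eq_integral_of_forall_compl_eq_zero
      (fun x hx => by rw [hO1 x hx]; ring)).symm
  have hRbound : |∫ x, lap (divg v) x * (l x)^2|
      ≤ (∫ x in O, (lap (divg v) x)^2) ^ ((1:ℝ)/2)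
        * (CS * (∫ x, ∑ i, (pd l i x)^2) * (volume O).toReal ^ ((1:ℝ)/6)) := by
    rw [hReq]
    calc |∫ x in O, lap (divg v) x * (l x)^2|
        ≤ (∫ x in O, (lap (divg v) x)^2) ^ ((1:ℝ)/2) * (∫ x in O, (l x)^4) ^ ((1:ℝ)/2) :=
          hCSO
      _ ≤ (∫ x in O, (lap (divg v) x)^2) ^ ((1:ℝ)/2)
          * (CS * (∫ x, ∑ i, (pd l i x)^2) * (volume O).toReal ^ ((1:ℝ)/6)) :=
          mul_le_mul_of_nonneg_left hL4half hS0
  -- ## lower bound: (k/2) N ≤ ∫ ∇G ⋅ ∇l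
  have hE0 : (0:ℝ) ≤ ∫ x, (lap l x)^2 := integral_nonneg fun x => sq_nonneg _
  have main : k/2 * (∫ x, ∑ i, (pd l i x)^2) ≤ ∫ x, ∑ i, pd G i x * pd l i x := by
    rw [key]
    have hJ' := abs_le.mp hJ
    have hR' := abs_le.mp hRbound
    have hsm : (2 * M + (CS / 2) * (volume O).toReal ^ ((1:ℝ)/6)
        * (∫ x in O, (lap (divg v) x)^2) ^ ((1:ℝ)/2)) * (∫ x, ∑ i, (pd l i x)^2)
        ≤ k * (∫ x, ∑ i, (pd l i x)^2) := mul_le_mul_of_nonneg_right hsmall hN0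
    nlinarith [mul_nonneg hε.le hE0, hJ'.1, hR'.1, hsm]
  -- ## upper bound: Cauchy-Schwarz for ∫ ∇G ⋅ ∇l
  have hGN0 : (0:ℝ) ≤ ∫ x, ∑ i, (pd G i x)^2 :=
    integral_nonneg fun x => Finset.sum_nonneg fun i _ => sq_nonneg _
  have hCSfinal : (∫ x, ∑ i, pd G i x * pd l i x)
      ≤ (∫ x, ∑ i, (pd G i x)^2) ^ ((1:ℝ)/2) * (∫ x, ∑ i, (pd l i x)^2) ^ ((1:ℝ)/2) := by
    have hptCS : ∀ x : E3, (∑ i, pd G i x * pd l i x)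
        ≤ Real.sqrt (∑ i, (pd G i x)^2) * Real.sqrt (∑ i, (pd l i x)^2) := by
      intro x
      have ha : (∑ i, pd G i x * pd l i x)
          = @inner ℝ _ _ (vecOf (fun i => pd G i x)) (vecOf (fun i => pd l i x)) := by
        rw [inner_vecOf]
        exact Finset.sum_congr rfl fun i _ => by rw [vecOf_apply]
      have hb : ∀ (a : Fin 3 → ℝ), ‖vecOf a‖ = Real.sqrt (∑ i, (a i)^2) := by
        intro a
        have : ‖vecOf a‖ * ‖vecOf a‖ = ∑ i, (a i)^2 := by
          rw [← real_inner_self_eq_norm_mul_norm, inner_vecOf]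
          exact Finset.sum_congr rfl fun i _ => by rw [vecOf_apply]; ring
        rw [← this, Real.sqrt_mul_self (norm_nonneg _)]
      rw [ha]
      calc @inner ℝ _ _ (vecOf (fun i => pd G i x)) (vecOf (fun i => pd l i x))
          ≤ ‖vecOf (fun i => pd G i x)‖ * ‖vecOf (fun i => pd l i x)‖ :=
            real_inner_le_norm _ _
        _ = Real.sqrt (∑ i, (pd G i x)^2) * Real.sqrt (∑ i, (pd l i x)^2) := by
            rw [hb, hb]
    have hconj : Real.HolderConjugate 2 2 := Real.holderConjugate_iff.mpr ⟨by norm_num, by norm_num⟩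
    have csG : HasCompactSupport (fun x => Real.sqrt (∑ i, (pd G i x)^2)) :=
      csOf _ (fun x hx => by
        rw [Finset.sum_eq_zero fun i _ => by rw [h0pdG i x hx]; ring, Real.sqrt_zero])
    have csl2 : HasCompactSupport (fun x => Real.sqrt (∑ i, (pd l i x)^2)) :=
      csOf _ (fun x hx => by rw [h0Q x hx, Real.sqrt_zero])
    have cG : Continuous (fun x => Real.sqrt (∑ i, (pd G i x)^2)) :=
      Real.continuous_sqrt.comp (continuous_finset_sum _ fun i _ => (cpdG i).pow 2)
    have cL : Continuous (fun x => Real.sqrt (∑ i, (pd l i x)^2)) :=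
      Real.continuous_sqrt.comp (continuous_finset_sum _ fun i _ => (cpdl i).pow 2)
    have hmem1 : MemLp (fun x => Real.sqrt (∑ i, (pd G i x)^2)) (ENNReal.ofReal 2) volume :=
      cG.memLp_of_hasCompactSupport csG
    have hmem2 : MemLp (fun x => Real.sqrt (∑ i, (pd l i x)^2)) (ENNReal.ofReal 2) volume :=
      cL.memLp_of_hasCompactSupport csl2
    have hH := integral_mul_le_Lp_mul_Lq_of_nonneg (μ := volume) hconj
      (f := fun x => Real.sqrt (∑ i, (pd G i x)^2))
      (g := fun x => Real.sqrt (∑ i, (pd l i x)^2))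
      (Filter.Eventually.of_forall fun x => Real.sqrt_nonneg _)
      (Filter.Eventually.of_forall fun x => Real.sqrt_nonneg _)
      hmem1 hmem2
    have e1 : (∫ x, (Real.sqrt (∑ i, (pd G i x)^2)) ^ (2:ℝ)) = ∫ x, ∑ i, (pd G i x)^2 := by
      refine integral_congr_ae (Filter.Eventually.of_forall fun x => ?_)
      dsimp only
      rw [show ((2:ℝ)) = ((2:ℕ):ℝ) by norm_num, Real.rpow_natCast,
        Real.sq_sqrt (Finset.sum_nonneg fun i _ => sq_nonneg _)]
    have e2 : (∫ x, (Real.sqrt (∑ i, (pd l i x)^2)) ^ (2:ℝ)) = ∫ x, ∑ i, (pd l i x)^2 := by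
      refine integral_congr_ae (Filter.Eventually.of_forall fun x => ?_)
      dsimp only
      rw [show ((2:ℝ)) = ((2:ℕ):ℝ) by norm_num, Real.rpow_natCast,
        Real.sq_sqrt (Finset.sum_nonneg fun i _ => sq_nonneg _)]
    have isum : Integrable (fun x => ∑ i, pd G i x * pd l i x) :=
      intOf _ (continuous_finset_sum _ fun i _ => (cpdG i).mul (cpdl i))
        (fun x hx => Finset.sum_eq_zero fun i _ => by rw [h0pd i x hx, mul_zero])
    have iprod : Integrable
        (fun x => Real.sqrt (∑ i, (pd G i x)^2) * Real.sqrt (∑ i, (pd l i x)^2)) :=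
      (cG.mul cL).integrable_of_hasCompactSupport (csG.mul_right)
    calc (∫ x, ∑ i, pd G i x * pd l i x)
        ≤ ∫ x, Real.sqrt (∑ i, (pd G i x)^2) * Real.sqrt (∑ i, (pd l i x)^2) :=
          integral_mono isum iprod hptCS
      _ ≤ (∫ x, (Real.sqrt (∑ i, (pd G i x)^2)) ^ (2:ℝ)) ^ ((1:ℝ)/2)
          * (∫ x, (Real.sqrt (∑ i, (pd l i x)^2)) ^ (2:ℝ)) ^ ((1:ℝ)/2) := hH
      _ = (∫ x, ∑ i, (pd G i x)^2) ^ ((1:ℝ)/2) * (∫ x, ∑ i, (pd l i x)^2) ^ ((1:ℝ)/2) := by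
          rw [e1, e2]
  -- ## conclusion
  by_cases hN : (∫ x, ∑ i, (pd l i x)^2) = 0
  · rw [hN, Real.zero_rpow (by norm_num)]
    exact mul_nonneg (by positivity) (Real.rpow_nonneg hGN0 _)
  · have hNpos : (0:ℝ) < ∫ x, ∑ i, (pd l i x)^2 := lt_of_le_of_ne hN0 (Ne.symm hN)
    have hNhalfpos : (0:ℝ) < (∫ x, ∑ i, (pd l i x)^2) ^ ((1:ℝ)/2) :=
      Real.rpow_pos_of_pos hNpos _
    have hNsplit : (∫ x, ∑ i, (pd l i x)^2)
        = (∫ x, ∑ i, (pd l i x)^2) ^ ((1:ℝ)/2) * (∫ x, ∑ i, (pd l i x)^2) ^ ((1:ℝ)/2) := by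
      rw [← Real.rpow_add hNpos]
      norm_num
    have step : k/2 * ((∫ x, ∑ i, (pd l i x)^2) ^ ((1:ℝ)/2))
        ≤ (∫ x, ∑ i, (pd G i x)^2) ^ ((1:ℝ)/2) := by
      have h1 : k/2 * ((∫ x, ∑ i, (pd l i x)^2) ^ ((1:ℝ)/2) * (∫ x, ∑ i, (pd l i x)^2) ^ ((1:ℝ)/2))
          ≤ (∫ x, ∑ i, (pd G i x)^2) ^ ((1:ℝ)/2) * (∫ x, ∑ i, (pd l i x)^2) ^ ((1:ℝ)/2) := by
        rw [← hNsplit]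
        exact le_trans main hCSfinal
      have h2 := (mul_le_mul_iff_of_pos_right hNhalfpos).mp (by linarith [h1] :
        (k/2 * (∫ x, ∑ i, (pd l i x)^2) ^ ((1:ℝ)/2)) * (∫ x, ∑ i, (pd l i x)^2) ^ ((1:ℝ)/2)
          ≤ (∫ x, ∑ i, (pd G i x)^2) ^ ((1:ℝ)/2) * (∫ x, ∑ i, (pd l i x)^2) ^ ((1:ℝ)/2))
      exact h2
    have hk2 : (0:ℝ) < k/2 := by linarith
    calc (∫ x, ∑ i, (pd l i x)^2) ^ ((1:ℝ)/2)
        = (2/k) * (k/2 * ((∫ x, ∑ i, (pd l i x)^2) ^ ((1:ℝ)/2))) := by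
          field_simp
      _ ≤ (2/k) * ((∫ x, ∑ i, (pd G i x)^2) ^ ((1:ℝ)/2)) := by
          apply mul_le_mul_of_nonneg_left step (by positivity)

end
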